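/- Let 0 < s < t and c > 0. Then the first moment of the Brownian meander transition density satisfies ∫₀^∞ x · (φ_{t-s}(c - x) − φ_{t-s}(c + x)) · (x t^{3/2} / (c s^{3/2})) · exp(-x²/(2s)) · exp(c²/(2t)) dx = ((t − s + s c²/t) / c) · erf( c √s / √(2 t (t − s)) ) + √(2 s (t − s) / (π t)) · exp( − s c² / (2 t (t − s)) ). -/

import Mathlib

open Real MeasureTheory Set

noncomputable def erf (z : ℝ) : ℝ := 2 / Real.sqrt π * ∫ u in (0:ℝ)..z, Real.exp (-u ^ 2)


/-- Centered Gaussian density with variance `σ`. -/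
noncomputable def phi (σ x : ℝ) : ℝ := (Real.sqrt (2 * π * σ))⁻¹ * Real.exp (-x ^ 2 / (2 * σ))

open Filter Topology

lemma erf_hasDerivAt (z : ℝ) : HasDerivAt erf (2 / Real.sqrt π * Real.exp (-z ^ 2)) z := by
  have hc : Continuous fun u : ℝ => Real.exp (-u ^ 2) := by continuity
  have h := intervalIntegral.integral_hasDerivAt_right
    (hc.intervalIntegrable 0 z) (hc.stronglyMeasurableAtFilter _ _) hc.continuousAt
  exact h.const_mul (2 / Real.sqrt π)

lemma erf_neg (z : ℝ) : erf (-z) = - erf z := by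
  unfold erf
  rw [← mul_neg]
  congr 1
  have h := intervalIntegral.integral_comp_neg (a := -z) (b := 0) (fun u => Real.exp (-u ^ 2))
  simp only [neg_neg, neg_zero, neg_sq] at h
  rw [intervalIntegral.integral_symm, ← h]

lemma tendsto_erf : Tendsto erf atTop (𝓝 1) := by
  have hint : IntegrableOn (fun u : ℝ => Real.exp (-u ^ 2)) (Ioi 0) := by
    have := (integrable_exp_neg_mul_sq (by norm_num : (0:ℝ) < 1)).integrableOn (s := Ioi 0)
    simpa using this
  have h := intervalIntegral_tendsto_integral_Ioi 0 hint tendsto_id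
  have hval : ∫ u in Ioi (0:ℝ), Real.exp (-u ^ 2) = Real.sqrt π / 2 := by
    have := integral_gaussian_Ioi 1
    simpa using this
  rw [hval] at h
  have h2 := h.const_mul (2 / Real.sqrt π)
  have : 2 / Real.sqrt π * (Real.sqrt π / 2) = 1 := by
    have : Real.sqrt π ≠ 0 := ne_of_gt (Real.sqrt_pos.mpr pi_pos)
    field_simp
  rw [this] at h2
  exact h2

lemma tendsto_exp_base {v : ℝ} (hv : 0 < v) :
    Tendsto (fun y : ℝ => Real.exp (-y ^ 2 / (2 * v))) atTop (𝓝 0) := by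
  have hsq : Tendsto (fun y : ℝ => y ^ 2 * (2 * v)⁻¹) atTop atTop :=
    (tendsto_pow_atTop two_ne_zero).atTop_mul_const (by positivity)
  have hbot : Tendsto (fun y : ℝ => -y ^ 2 / (2 * v)) atTop atBot :=
    (tendsto_neg_atTop_atBot.comp hsq).congr
      (fun y => by simp only [Function.comp_apply]; ring)
  exact Real.tendsto_exp_atBot.comp hbot

lemma tendsto_mul_exp_base {v : ℝ} (hv : 0 < v) :
    Tendsto (fun y : ℝ => y * Real.exp (-y ^ 2 / (2 * v))) atTop (𝓝 0) := by
  have hb : 0 < (2 * v)⁻¹ := by positivity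
  have hhalf : Tendsto (fun x : ℝ => Real.exp (-(1/2) * x)) atTop (𝓝 0) := by
    apply Real.tendsto_exp_atBot.comp
    have h : Tendsto (fun x : ℝ => (1/2 : ℝ) * x) atTop atTop :=
      tendsto_id.const_mul_atTop (by norm_num)
    exact (tendsto_neg_atTop_atBot.comp h).congr
      (fun y => by simp only [Function.comp_apply]; ring)
  have h := (rpow_mul_exp_neg_mul_sq_isLittleO_exp_neg hb 1).trans_tendsto hhalf
  refine h.congr' ?_
  filter_upwards [eventually_gt_atTop (0:ℝ)] with y hy
  rw [Real.rpow_one]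
  congr 1
  field_simp

lemma tendsto_shift_mul_exp {v : ℝ} (hv : 0 < v) (a m : ℝ) :
    Tendsto (fun x : ℝ => (x + a) * Real.exp (-(x - m) ^ 2 / (2 * v))) atTop (𝓝 0) := by
  have hcomp : Tendsto (fun x : ℝ => x - m) atTop atTop :=
    tendsto_atTop_add_const_right atTop (-m) tendsto_id |>.congr
      (fun x => by simp [sub_eq_add_neg])
  have h1 := (tendsto_mul_exp_base hv).comp hcomp
  have h2 := ((tendsto_exp_base hv).comp hcomp).const_mul (m + a)
  have h3 := h1.add h2
  have heq : (fun x : ℝ => (x + a) * Real.exp (-(x - m) ^ 2 / (2 * v))) =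
      fun x => ((fun y : ℝ => y * Real.exp (-y ^ 2 / (2 * v))) ∘ (fun x => x - m)) x +
        (m + a) * ((fun y : ℝ => Real.exp (-y ^ 2 / (2 * v))) ∘ (fun x => x - m)) x := by
    funext x
    simp only [Function.comp_apply]
    ring
  rw [heq]
  simpa using h3

lemma integrable_sq_gauss (m : ℝ) {v : ℝ} (hv : 0 < v) :
    Integrable (fun x : ℝ => x ^ 2 * Real.exp (-(x - m) ^ 2 / (2 * v))) := by
  have hb : 0 < (4 * v)⁻¹ := by positivity
  have hdom : Integrable (fun x : ℝ => (8 * v + 2 * m ^ 2) *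
      Real.exp (-(4 * v)⁻¹ * (x - m) ^ 2)) :=
    ((integrable_exp_neg_mul_sq hb).comp_sub_right m).const_mul _
  refine hdom.mono' ?_ ?_
  · apply Continuous.aestronglyMeasurable
    fun_prop
  · filter_upwards with x
    rw [Real.norm_eq_abs, abs_mul, abs_of_nonneg (Real.exp_pos _).le,
      abs_of_nonneg (sq_nonneg x)]
    set y := x - m with hy
    set z := y ^ 2 / (4 * v) with hz
    have hzE : -(4 * v)⁻¹ * y ^ 2 = -z := by rw [hz]; field_simp
    have hxy : x = y + m := by rw [hy]; ring
    have hx2 : x ^ 2 ≤ 2 * y ^ 2 + 2 * m ^ 2 := by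
      rw [hxy]; nlinarith [sq_nonneg (y - m)]
    have hEpos : 0 < Real.exp (-z) := Real.exp_pos _
    have hE1 : Real.exp (-z) ≤ 1 := by
      rw [Real.exp_le_one_iff, hz]
      have : 0 ≤ y ^ 2 / (4 * v) := by positivity
      linarith
    have hzz : y ^ 2 ≤ 4 * v * Real.exp z := by
      have h1 := Real.add_one_le_exp z
      have : y ^ 2 = 4 * v * z := by rw [hz]; field_simp
      nlinarith
    have hmul : Real.exp z * Real.exp (-z) = 1 := by
      rw [← Real.exp_add]; simp
    have he1 : y ^ 2 * Real.exp (-z) ≤ 4 * v := by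
      calc y ^ 2 * Real.exp (-z) ≤ 4 * v * Real.exp z * Real.exp (-z) :=
            mul_le_mul_of_nonneg_right hzz hEpos.le
        _ = 4 * v := by rw [mul_assoc, hmul, mul_one]
    have hsplit : Real.exp (-y ^ 2 / (2 * v)) = Real.exp (-z) * Real.exp (-z) := by
      rw [← Real.exp_add, hz]
      congr 1
      field_simp
      ring
    rw [hzE, hsplit]
    calc x ^ 2 * (Real.exp (-z) * Real.exp (-z))
        ≤ (2 * y ^ 2 + 2 * m ^ 2) * (Real.exp (-z) * Real.exp (-z)) :=
          mul_le_mul_of_nonneg_right hx2 (by positivity)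
      _ = 2 * (y ^ 2 * Real.exp (-z)) * Real.exp (-z) + 2 * m ^ 2 * (Real.exp (-z) * Real.exp (-z)) := by ring
      _ ≤ 2 * (4 * v) * Real.exp (-z) + 2 * m ^ 2 * Real.exp (-z) := by
          have h1 := mul_le_mul_of_nonneg_right he1 hEpos.le
          have h2 : Real.exp (-z) * Real.exp (-z) ≤ Real.exp (-z) :=
            mul_le_of_le_one_left hEpos.le hE1
          nlinarith [sq_nonneg m]
      _ = (8 * v + 2 * m ^ 2) * Real.exp (-z) := by ring

lemma sqrt_const_eq {v : ℝ} (hv : 0 < v) :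
    2 * Real.sqrt (π * v / 2) = Real.sqrt π * Real.sqrt (2 * v) := by
  rw [← Real.sqrt_mul pi_pos.le]
  rw [show π * (2 * v) = 4 * (π * v / 2) by ring, Real.sqrt_mul (by norm_num : (0:ℝ) ≤ 4),
    show Real.sqrt 4 = 2 by rw [show (4:ℝ) = 2 ^ 2 by norm_num, Real.sqrt_sq two_pos.le]]

lemma hasDerivAt_erf_comp {v : ℝ} (hv : 0 < v) (a x : ℝ) :
    HasDerivAt (fun x => erf ((x - a) / Real.sqrt (2 * v)))
      ((Real.sqrt (π * v / 2))⁻¹ * Real.exp (-(x - a) ^ 2 / (2 * v))) x := by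
  have h2v : (0:ℝ) < 2 * v := by positivity
  have hs : 0 < Real.sqrt (2 * v) := Real.sqrt_pos.mpr h2v
  have hπ : 0 < Real.sqrt π := Real.sqrt_pos.mpr pi_pos
  have hS : 0 < Real.sqrt (π * v / 2) := Real.sqrt_pos.mpr (by positivity)
  have hlin : HasDerivAt (fun x : ℝ => (x - a) / Real.sqrt (2 * v))
      (1 / Real.sqrt (2 * v)) x := by
    simpa using ((hasDerivAt_id x).sub_const a).div_const (Real.sqrt (2 * v))
  have h := (erf_hasDerivAt ((x - a) / Real.sqrt (2 * v))).comp x hlin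
  refine h.congr_deriv ?_
  rw [show -((x - a) / Real.sqrt (2 * v)) ^ 2 = -(x - a) ^ 2 / (2 * v) by
    rw [div_pow, Real.sq_sqrt h2v.le]; ring]
  have hcc : 2 / Real.sqrt π * (1 / Real.sqrt (2 * v)) = (Real.sqrt (π * v / 2))⁻¹ := by
    rw [div_mul_div_comm, mul_one, ← sqrt_const_eq hv]
    field_simp
  rw [← hcc]
  ring

lemma key_integral {v m : ℝ} (hv : 0 < v) (hm : 0 < m) :
    ∫ x in Ioi (0:ℝ), x ^ 2 *
        (Real.exp (-(x - m) ^ 2 / (2 * v)) - Real.exp (-(x + m) ^ 2 / (2 * v))) =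
      2 * (v + m ^ 2) * Real.sqrt (π * v / 2) * erf (m / Real.sqrt (2 * v)) +
        2 * v * m * Real.exp (-m ^ 2 / (2 * v)) := by
  have h2v : (0:ℝ) < 2 * v := by positivity
  have hS : 0 < Real.sqrt (π * v / 2) := Real.sqrt_pos.mpr (by positivity)
  set F : ℝ → ℝ := fun x =>
    (-v * ((x + m) * Real.exp (-(x - m) ^ 2 / (2 * v))) +
      v * ((x - m) * Real.exp (-(x + m) ^ 2 / (2 * v)))) +
      (v + m ^ 2) * Real.sqrt (π * v / 2) *
        (erf ((x - m) / Real.sqrt (2 * v)) - erf ((x + m) / Real.sqrt (2 * v))) with hF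
  have hderiv : ∀ x : ℝ, HasDerivAt F
      (x ^ 2 * (Real.exp (-(x - m) ^ 2 / (2 * v)) - Real.exp (-(x + m) ^ 2 / (2 * v)))) x := by
    intro x
    have hin1 : HasDerivAt (fun x : ℝ => -(x - m) ^ 2 / (2 * v))
        (-(2 * (x - m)) / (2 * v)) x := by
      simpa using (((hasDerivAt_id x).sub_const m).pow 2).neg.div_const (2 * v)
    have hin2 : HasDerivAt (fun x : ℝ => -(x + m) ^ 2 / (2 * v))
        (-(2 * (x + m)) / (2 * v)) x := by
      simpa using (((hasDerivAt_id x).add_const m).pow 2).neg.div_const (2 * v)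
    have he1 := hin1.exp
    have he2 := hin2.exp
    have h1 := (((hasDerivAt_id x).add_const m).mul he1).const_mul (-v)
    have h2 := (((hasDerivAt_id x).sub_const m).mul he2).const_mul v
    have herf1 := hasDerivAt_erf_comp hv m x
    have herf2 : HasDerivAt (fun x => erf ((x + m) / Real.sqrt (2 * v)))
        ((Real.sqrt (π * v / 2))⁻¹ * Real.exp (-(x + m) ^ 2 / (2 * v))) x := by
      have := hasDerivAt_erf_comp hv (-m) x
      simpa [sub_neg_eq_add] using this
    have h3 := (herf1.sub herf2).const_mul ((v + m ^ 2) * Real.sqrt (π * v / 2))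
    have htot := (h1.add h2).add h3
    refine htot.congr_deriv ?_
    simp only [id_eq]
    field_simp
    ring
  have hint : IntegrableOn (fun x : ℝ => x ^ 2 *
      (Real.exp (-(x - m) ^ 2 / (2 * v)) - Real.exp (-(x + m) ^ 2 / (2 * v)))) (Ioi 0) := by
    have h2 : Integrable (fun x : ℝ => x ^ 2 * Real.exp (-(x + m) ^ 2 / (2 * v))) := by
      simpa [sub_neg_eq_add] using integrable_sq_gauss (-m) hv
    have := (integrable_sq_gauss m hv).sub h2
    refine Integrable.integrableOn ?_
    simpa [mul_sub, Pi.sub_def] using this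
  have htop : Tendsto F atTop (𝓝 0) := by
    have t1 := (tendsto_shift_mul_exp hv m m).const_mul (-v)
    have t2 : Tendsto (fun x : ℝ => v * ((x - m) * Real.exp (-(x + m) ^ 2 / (2 * v))))
        atTop (𝓝 0) := by
      have := (tendsto_shift_mul_exp hv (-m) (-m)).const_mul v
      simp only [sub_neg_eq_add, mul_zero] at this ⊢
      refine this.congr fun x => by rw [sub_eq_add_neg]
    have hdiv1 : Tendsto (fun x : ℝ => (x - m) / Real.sqrt (2 * v)) atTop atTop := by
      apply Tendsto.atTop_div_const (Real.sqrt_pos.mpr h2v)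
      exact (tendsto_atTop_add_const_right atTop (-m) tendsto_id).congr
        (fun x => by simp [sub_eq_add_neg])
    have hdiv2 : Tendsto (fun x : ℝ => (x + m) / Real.sqrt (2 * v)) atTop atTop :=
      Tendsto.atTop_div_const (Real.sqrt_pos.mpr h2v)
        (tendsto_atTop_add_const_right atTop m tendsto_id)
    have t3 := ((tendsto_erf.comp hdiv1).sub (tendsto_erf.comp hdiv2)).const_mul
      ((v + m ^ 2) * Real.sqrt (π * v / 2))
    have htot := (t1.add t2).add t3
    rw [hF]
    simpa using htot
  have hcalc := integral_Ioi_of_hasDerivAt_of_tendsto'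
    (fun x _ => hderiv x) hint htop
  rw [hcalc, hF]
  simp only [zero_sub, zero_add, neg_sq, neg_div]
  rw [erf_neg]
  ring

theorem stmt8 (s t c : ℝ) (hs : 0 < s) (hst : s < t) (hc : 0 < c) :
    ∫ x in Ioi (0 : ℝ),
        x * ((phi (t - s) (c - x) - phi (t - s) (c + x)) *
          (x * t ^ ((3 : ℝ) / 2) / (c * s ^ ((3 : ℝ) / 2))) *
          Real.exp (-x ^ 2 / (2 * s)) * Real.exp (c ^ 2 / (2 * t))) =
      (t - s + s * c ^ 2 / t) / c *
          erf (c * Real.sqrt s / Real.sqrt (2 * t * (t - s))) +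
        Real.sqrt (2 * s * (t - s) / (π * t)) *
          Real.exp (-(s * c ^ 2) / (2 * t * (t - s))) := by
  have ht : 0 < t := hs.trans hst
  have hτ : 0 < t - s := sub_pos.mpr hst
  set v : ℝ := s * (t - s) / t with hv_def
  set m : ℝ := s * c / t with hm_def
  have hv : 0 < v := by rw [hv_def]; positivity
  have hm : 0 < m := by rw [hm_def]; positivity
  set C : ℝ := t / (c * s) * (Real.sqrt (2 * π * v))⁻¹ with hC_def
  -- rpow facts
  have hrt : t ^ ((3:ℝ)/2) = t * Real.sqrt t := by
    rw [show (3:ℝ)/2 = 1 + 1/2 by norm_num, Real.rpow_add ht, Real.rpow_one,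
      ← Real.sqrt_eq_rpow]
  have hrs : s ^ ((3:ℝ)/2) = s * Real.sqrt s := by
    rw [show (3:ℝ)/2 = 1 + 1/2 by norm_num, Real.rpow_add hs, Real.rpow_one,
      ← Real.sqrt_eq_rpow]
  -- constant identity
  have h1 : Real.sqrt t * Real.sqrt (2 * π * v) = Real.sqrt s * Real.sqrt (2 * π * (t - s)) := by
    rw [← Real.sqrt_mul ht.le, ← Real.sqrt_mul hs.le]
    congr 1
    rw [hv_def]; field_simp
  have hC : t ^ ((3:ℝ)/2) / (c * s ^ ((3:ℝ)/2)) * (Real.sqrt (2 * π * (t - s)))⁻¹ = C := by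
    rw [hrt, hrs, hC_def]
    have p1 : (0:ℝ) < Real.sqrt t := Real.sqrt_pos.mpr ht
    have p2 : (0:ℝ) < Real.sqrt s := Real.sqrt_pos.mpr hs
    have p3 : (0:ℝ) < Real.sqrt (2 * π * (t - s)) := Real.sqrt_pos.mpr (by positivity)
    have p4 : (0:ℝ) < Real.sqrt (2 * π * v) := Real.sqrt_pos.mpr (by positivity)
    revert h1 p1 p2 p3 p4
    generalize Real.sqrt t = A
    generalize Real.sqrt s = B
    generalize Real.sqrt (2 * π * (t - s)) = X
    generalize Real.sqrt (2 * π * v) = Y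
    intro h1 p1 p2 p3 p4
    field_simp
    nlinarith [h1, mul_pos p1 p4, mul_pos p2 p3, mul_pos (mul_pos ht hc) hs]
  -- pointwise rewrite
  have hpoint : ∀ x : ℝ,
      x * ((phi (t - s) (c - x) - phi (t - s) (c + x)) *
        (x * t ^ ((3:ℝ)/2) / (c * s ^ ((3:ℝ)/2))) *
        Real.exp (-x ^ 2 / (2 * s)) * Real.exp (c ^ 2 / (2 * t))) =
      C * (x ^ 2 * (Real.exp (-(x - m) ^ 2 / (2 * v)) - Real.exp (-(x + m) ^ 2 / (2 * v)))) := by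
    intro x
    have hsum1 : Real.exp (-(c - x) ^ 2 / (2 * (t - s))) * Real.exp (-x ^ 2 / (2 * s)) *
        Real.exp (c ^ 2 / (2 * t)) = Real.exp (-(x - m) ^ 2 / (2 * v)) := by
      rw [← Real.exp_add, ← Real.exp_add]
      congr 1
      rw [hv_def, hm_def]; field_simp; ring
    have hsum2 : Real.exp (-(c + x) ^ 2 / (2 * (t - s))) * Real.exp (-x ^ 2 / (2 * s)) *
        Real.exp (c ^ 2 / (2 * t)) = Real.exp (-(x + m) ^ 2 / (2 * v)) := by
      rw [← Real.exp_add, ← Real.exp_add]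
      congr 1
      rw [hv_def, hm_def]; field_simp; ring
    simp only [phi]
    calc x * (((Real.sqrt (2 * π * (t - s)))⁻¹ * Real.exp (-(c - x) ^ 2 / (2 * (t - s))) -
            (Real.sqrt (2 * π * (t - s)))⁻¹ * Real.exp (-(c + x) ^ 2 / (2 * (t - s)))) *
            (x * t ^ ((3:ℝ)/2) / (c * s ^ ((3:ℝ)/2))) *
            Real.exp (-x ^ 2 / (2 * s)) * Real.exp (c ^ 2 / (2 * t)))
        = (t ^ ((3:ℝ)/2) / (c * s ^ ((3:ℝ)/2)) * (Real.sqrt (2 * π * (t - s)))⁻¹) *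
            (x ^ 2 * ((Real.exp (-(c - x) ^ 2 / (2 * (t - s))) * Real.exp (-x ^ 2 / (2 * s)) *
              Real.exp (c ^ 2 / (2 * t))) -
              (Real.exp (-(c + x) ^ 2 / (2 * (t - s))) * Real.exp (-x ^ 2 / (2 * s)) *
              Real.exp (c ^ 2 / (2 * t))))) := by ring
      _ = C * (x ^ 2 * (Real.exp (-(x - m) ^ 2 / (2 * v)) -
              Real.exp (-(x + m) ^ 2 / (2 * v)))) := by rw [hsum1, hsum2, hC]
  rw [show (fun x : ℝ => x * ((phi (t - s) (c - x) - phi (t - s) (c + x)) *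
        (x * t ^ ((3:ℝ)/2) / (c * s ^ ((3:ℝ)/2))) *
        Real.exp (-x ^ 2 / (2 * s)) * Real.exp (c ^ 2 / (2 * t)))) =
      (fun x : ℝ => C * (x ^ 2 * (Real.exp (-(x - m) ^ 2 / (2 * v)) -
        Real.exp (-(x + m) ^ 2 / (2 * v))))) from funext hpoint]
  rw [MeasureTheory.integral_const_mul, key_integral hv hm]
  -- argument identities
  have hargs : m / Real.sqrt (2 * v) = c * Real.sqrt s / Real.sqrt (2 * t * (t - s)) := by
    rw [show m / Real.sqrt (2 * v) = Real.sqrt (m ^ 2 / (2 * v)) by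
        rw [Real.sqrt_div (sq_nonneg m), Real.sqrt_sq hm.le],
      show c * Real.sqrt s / Real.sqrt (2 * t * (t - s)) =
          Real.sqrt (c ^ 2 * s / (2 * t * (t - s))) by
        rw [Real.sqrt_div (by positivity), Real.sqrt_mul (sq_nonneg c), Real.sqrt_sq hc.le]]
    congr 1
    rw [hv_def, hm_def]; field_simp
  have hexp : -m ^ 2 / (2 * v) = -(s * c ^ 2) / (2 * t * (t - s)) := by
    rw [hv_def, hm_def]; field_simp
  rw [← hargs, ← hexp]
  -- coefficient identities
  have hcancel : (Real.sqrt (2 * π * v))⁻¹ * (2 * Real.sqrt (π * v / 2)) = 1 := by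
    rw [sqrt_const_eq hv, ← Real.sqrt_mul pi_pos.le, show π * (2 * v) = 2 * π * v by ring]
    exact inv_mul_cancel₀ (ne_of_gt (Real.sqrt_pos.mpr (by positivity)))
  have hco1 : C * (2 * (v + m ^ 2) * Real.sqrt (π * v / 2)) = (t - s + s * c ^ 2 / t) / c := by
    rw [hC_def]
    calc t / (c * s) * (Real.sqrt (2 * π * v))⁻¹ * (2 * (v + m ^ 2) * Real.sqrt (π * v / 2))
        = t / (c * s) * (v + m ^ 2) *
            ((Real.sqrt (2 * π * v))⁻¹ * (2 * Real.sqrt (π * v / 2))) := by ring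
      _ = t / (c * s) * (v + m ^ 2) := by rw [hcancel, mul_one]
      _ = (t - s + s * c ^ 2 / t) / c := by rw [hv_def, hm_def]; field_simp
  have hprod : Real.sqrt (2 * s * (t - s) / (π * t)) * Real.sqrt (2 * π * v) =
      2 * s * (t - s) / t := by
    rw [← Real.sqrt_mul (by positivity)]
    rw [show 2 * s * (t - s) / (π * t) * (2 * π * v) = (2 * s * (t - s) / t) ^ 2 by
      rw [hv_def]; field_simp]
    exact Real.sqrt_sq (by positivity)
  have hco2 : C * (2 * v * m) = Real.sqrt (2 * s * (t - s) / (π * t)) := by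
    rw [hC_def]
    have p4 : (0:ℝ) < Real.sqrt (2 * π * v) := Real.sqrt_pos.mpr (by positivity)
    rw [mul_comm (t / (c * s)) _, mul_assoc, inv_mul_eq_div, div_eq_iff p4.ne', hprod]
    rw [hv_def, hm_def]; field_simp
  calc C * (2 * (v + m ^ 2) * Real.sqrt (π * v / 2) * erf (m / Real.sqrt (2 * v)) +
        2 * v * m * Real.exp (-m ^ 2 / (2 * v)))
      = (C * (2 * (v + m ^ 2) * Real.sqrt (π * v / 2))) * erf (m / Real.sqrt (2 * v)) +
        (C * (2 * v * m)) * Real.exp (-m ^ 2 / (2 * v)) := by ring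
    _ = _ := by rw [hco1, hco2]
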